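/- arXiv:2107.08676 — 2 statements merged into one kernel-verified Lean document; each statement's English description precedes it below -/
import Mathlib

section
/- Let f be an n-variable Boolean function, t ∈ [n], and ε a real number with t-inf(f) ≤ ε ≤ 1 and ε > 0. If k is a positive integer satisfying k ≥ t − 1 + (n − t + 1)(1 − (1 − x)^{1/t}), where x = t-inf(f)/ε, then Σ_{i=k}^{n} p̂_f(i) ≤ ε (i.e., the Fourier spectrum of f is ε-concentrated on coefficients of weights below k). -/
open Finset

namespace BF

/-- Hamming weight of a vector in `F_2^n`. -/
def wt {n : ℕ} (a : Fin n → ZMod 2) : ℕ := (univ.filter fun i => a i ≠ 0).card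

/-- Normalised Walsh transform `W_f(a) = 2^{-n} Σ_x (-1)^{f(x) ⊕ ⟨x,a⟩}`. -/
noncomputable def walsh {n : ℕ} (f : (Fin n → ZMod 2) → ZMod 2) (a : Fin n → ZMod 2) : ℝ :=
  (1 / 2 ^ n) * ∑ x : Fin n → ZMod 2, (-1 : ℝ) ^ (f x + ∑ i, x i * a i).val

/-- Normalised auto-correlation `C_f(a) = 2^{-n} Σ_x (-1)^{f(x) ⊕ f(x ⊕ a)}`. -/
noncomputable def autocorr {n : ℕ} (f : (Fin n → ZMod 2) → ZMod 2) (a : Fin n → ZMod 2) : ℝ :=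
  (1 / 2 ^ n) * ∑ x : Fin n → ZMod 2, (-1 : ℝ) ^ (f x + f (x + a)).val

/-- Influence of the set of variables `T` on `f`:
`inf_f(T) = 1 - 2^{-#T} Σ_{a ≤ χ_T} C_f(a)`. -/
noncomputable def influence {n : ℕ} (f : (Fin n → ZMod 2) → ZMod 2) (T : Finset (Fin n)) : ℝ :=
  1 - (1 / 2 ^ T.card) *
    ∑ a ∈ univ.filter (fun a : Fin n → ZMod 2 => ∀ i, a i ≠ 0 → i ∈ T), autocorr f a

/-- Total influence `t-inf(f) = (Σ_{#T = t} inf_f(T)) / C(n,t)`. -/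
noncomputable def totalInf {n : ℕ} (f : (Fin n → ZMod 2) → ZMod 2) (t : ℕ) : ℝ :=
  (∑ T ∈ univ.filter (fun T : Finset (Fin n) => T.card = t), influence f T) / (n.choose t)

/-- `p̂_f(k) = Σ_{wt(u) = k} (W_f(u))²`. -/
noncomputable def pHat {n : ℕ} (f : (Fin n → ZMod 2) → ZMod 2) (k : ℕ) : ℝ :=
  ∑ u ∈ univ.filter (fun u : Fin n → ZMod 2 => wt u = k), (walsh f u) ^ 2

noncomputable def chi (b : ZMod 2) : ℝ := (-1) ^ b.val
lemma zmod2_cases (a : ZMod 2) : a = 0 ∨ a = 1 := by revert a; decide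
lemma chi_zero : chi 0 = 1 := by simp [chi]
lemma chi_one : chi 1 = -1 := by rw [chi, show (1 : ZMod 2).val = 1 from rfl]; norm_num
lemma chi_add (a b : ZMod 2) : chi (a + b) = chi a * chi b := by
  rcases zmod2_cases a with ha | ha <;> rcases zmod2_cases b with hb | hb <;>
    subst ha <;> subst hb <;>
    simp [chi_zero, chi_one, show ((1 : ZMod 2) + 1) = 0 from by decide]
lemma chi_sq (a : ZMod 2) : chi a * chi a = 1 := by
  rcases zmod2_cases a with ha | ha <;> subst ha <;> norm_num [chi_zero, chi_one]
lemma chi_sum {ι : Type*} (s : Finset ι) (g : ι → ZMod 2) :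
    chi (∑ i ∈ s, g i) = ∏ i ∈ s, chi (g i) := by
  induction s using Finset.cons_induction with
  | empty => simp [chi_zero]
  | cons i s hi ih => rw [Finset.sum_cons, Finset.prod_cons, chi_add, ih]
lemma sum_zmod2 (g : ZMod 2 → ℝ) : ∑ b : ZMod 2, g b = g 0 + g 1 := by
  rw [show (univ : Finset (ZMod 2)) = {0, 1} from by decide]; simp
lemma zmod2_ne_zero {b : ZMod 2} (h : b ≠ 0) : b = 1 := by
  rcases zmod2_cases b with h' | h' <;> simp_all

/-- character orthogonality over vectors supported in `s` -/
lemma sum_chi_filter {n : ℕ} (s : Finset (Fin n)) (u : Fin n → ZMod 2) :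
    ∑ a ∈ univ.filter (fun a : Fin n → ZMod 2 => ∀ i, a i ≠ 0 → i ∈ s),
      chi (∑ i, a i * u i)
    = if ∀ i ∈ s, u i = 0 then (2 : ℝ) ^ s.card else 0 := by
  classical
  set w : Fin n → ZMod 2 → ℝ :=
    fun i b => (if i ∈ s then 1 else if b = 0 then 1 else 0) * chi (b * u i) with hw
  have step1 : ∑ a ∈ univ.filter (fun a : Fin n → ZMod 2 => ∀ i, a i ≠ 0 → i ∈ s),
      chi (∑ i, a i * u i) = ∑ a : Fin n → ZMod 2, ∏ i, w i (a i) := by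
    rw [Finset.sum_filter]
    refine Finset.sum_congr rfl fun a _ => ?_
    by_cases hP : ∀ i, a i ≠ 0 → i ∈ s
    · rw [if_pos hP, chi_sum]
      refine Finset.prod_congr rfl fun i _ => ?_
      by_cases hi : i ∈ s
      · simp [hw, hi]
      · have : a i = 0 := by by_contra hne; exact hi (hP i hne)
        simp [hw, hi, this]
    · rw [if_neg hP]
      push_neg at hP
      obtain ⟨i, hne, his⟩ := hP
      refine (Finset.prod_eq_zero (Finset.mem_univ i) ?_).symm
      simp [hw, his, hne]
  rw [step1]
  have step2 : ∑ a : Fin n → ZMod 2, ∏ i, w i (a i) = ∏ i, ∑ b : ZMod 2, w i b := by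
    rw [Finset.prod_univ_sum]
    rw [show Fintype.piFinset (fun _ : Fin n => (univ : Finset (ZMod 2))) = univ from
      Fintype.piFinset_univ]
  rw [step2]
  have step3 : ∀ i, (∑ b : ZMod 2, w i b)
      = if i ∈ s then (if u i = 0 then (2:ℝ) else 0) else 1 := by
    intro i
    rw [sum_zmod2]
    by_cases hi : i ∈ s
    · by_cases hu : u i = 0
      · simp [hw, hi, hu, chi_zero]; norm_num
      · have : u i = 1 := zmod2_ne_zero hu
        simp [hw, hi, this, chi_zero, chi_one]
    · simp [hw, hi, chi_zero]
  rw [Finset.prod_congr rfl (fun i _ => step3 i)]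
  rw [Finset.prod_ite_mem univ s, Finset.univ_inter]
  by_cases hall : ∀ i ∈ s, u i = 0
  · rw [if_pos hall, Finset.prod_congr rfl (fun i hi => if_pos (hall i hi)),
      Finset.prod_const]
  · rw [if_neg hall]
    push_neg at hall
    obtain ⟨i, his, hne⟩ := hall
    exact Finset.prod_eq_zero his (if_neg hne)

lemma sum_chi_univ {n : ℕ} (z : Fin n → ZMod 2) :
    ∑ u : Fin n → ZMod 2, chi (∑ i, z i * u i) = if z = 0 then (2 : ℝ) ^ n else 0 := by
  classical
  have h := sum_chi_filter (univ : Finset (Fin n)) z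
  have e1 : (univ.filter (fun a : Fin n → ZMod 2 => ∀ i, a i ≠ 0 → i ∈ univ)) = univ := by
    simp
  rw [e1] at h
  have e2 : ∀ a : Fin n → ZMod 2, (∑ i, a i * z i) = ∑ i, z i * a i := by
    intro a; exact Finset.sum_congr rfl fun i _ => mul_comm _ _
  simp only [e2] at h
  rw [h]
  have e3 : (∀ i ∈ (univ : Finset (Fin n)), z i = 0) ↔ z = 0 := by
    constructor
    · intro h'; funext i; exact h' i (mem_univ i)
    · intro h' i _; rw [h']; rfl
  simp only [e3, Finset.card_univ, Fintype.card_fin]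

/-- walsh in terms of chi -/
lemma walsh_eq {n : ℕ} (f : (Fin n → ZMod 2) → ZMod 2) (a : Fin n → ZMod 2) :
    walsh f a = (1 / 2 ^ n) * ∑ x : Fin n → ZMod 2, chi (f x) * chi (∑ i, x i * a i) := by
  unfold walsh
  congr 1
  exact Finset.sum_congr rfl fun x _ => chi_add _ _

lemma parseval {n : ℕ} (f : (Fin n → ZMod 2) → ZMod 2) :
    ∑ u : Fin n → ZMod 2, (walsh f u) ^ 2 = 1 := by
  classical
  have expand : ∀ u, (walsh f u) ^ 2 = (1 / 2 ^ n) ^ 2 *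
      ∑ x : Fin n → ZMod 2, ∑ y : Fin n → ZMod 2,
        chi (f x) * chi (f y) * chi (∑ i, (x i + y i) * u i) := by
    intro u
    rw [walsh_eq, mul_pow]
    simp only [sq]
    rw [Finset.sum_mul_sum]
    congr 1
    refine Finset.sum_congr rfl fun x _ => Finset.sum_congr rfl fun y _ => ?_
    have e : (∑ i, (x i + y i) * u i) = (∑ i, x i * u i) + (∑ i, y i * u i) := by
      rw [← Finset.sum_add_distrib]
      exact Finset.sum_congr rfl fun i _ => add_mul _ _ _
    rw [e, chi_add]; ring
  calc ∑ u : Fin n → ZMod 2, (walsh f u) ^ 2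
      = (1 / 2 ^ n) ^ 2 * ∑ x : Fin n → ZMod 2, ∑ y : Fin n → ZMod 2,
          chi (f x) * chi (f y) * ∑ u : Fin n → ZMod 2, chi (∑ i, (x i + y i) * u i) := by
        rw [Finset.sum_congr rfl fun u _ => expand u, ← Finset.mul_sum]
        congr 1
        rw [Finset.sum_comm]
        refine Finset.sum_congr rfl fun x _ => ?_
        rw [Finset.sum_comm]
        refine Finset.sum_congr rfl fun y _ => ?_
        rw [Finset.mul_sum]
    _ = 1 := by
        have key : ∀ x : Fin n → ZMod 2,
            (∑ y : Fin n → ZMod 2, chi (f x) * chi (f y) *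
              ∑ u : Fin n → ZMod 2, chi (∑ i, (x i + y i) * u i)) = (2:ℝ)^n := by
          intro x
          rw [Finset.sum_eq_single x]
          · rw [sum_chi_univ]
            have hz : (fun i => x i + x i) = (0 : Fin n → ZMod 2) :=
              funext fun i => CharTwo.add_self_eq_zero _
            rw [if_pos hz, chi_sq, one_mul]
          · intro y _ hyx
            rw [sum_chi_univ]
            have hz : ¬((fun i => x i + y i) = (0 : Fin n → ZMod 2)) := by
              intro hz0
              apply hyx
              funext i
              have h2 := congrFun hz0 i
              have h3 : x i + y i = 0 := h2
              revert h3
              generalize x i = a; generalize y i = b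
              revert a b; decide
            rw [if_neg hz, mul_zero]
          · intro hx; exact absurd (mem_univ x) hx
        rw [Finset.sum_congr rfl fun x _ => key x, Finset.sum_const, card_univ,
          Fintype.card_fun]
        simp only [Fintype.card_fin, nsmul_eq_mul]
        push_cast
        rw [ZMod.card]
        field_simp
        ring

lemma autocorr_eq {n : ℕ} (f : (Fin n → ZMod 2) → ZMod 2) (a : Fin n → ZMod 2) :
    autocorr f a = ∑ u : Fin n → ZMod 2, (walsh f u) ^ 2 * chi (∑ i, a i * u i) := by
  classical
  have expand : ∀ u : Fin n → ZMod 2, (walsh f u) ^ 2 * chi (∑ i, a i * u i)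
      = (1 / 2 ^ n) ^ 2 *
      ∑ x : Fin n → ZMod 2, ∑ y : Fin n → ZMod 2,
        chi (f x) * chi (f y) * chi (∑ i, (x i + y i + a i) * u i) := by
    intro u
    rw [walsh_eq, mul_pow]
    simp only [sq]
    rw [Finset.sum_mul_sum]
    rw [mul_assoc, Finset.sum_mul]
    congr 1
    refine Finset.sum_congr rfl fun x _ => ?_
    rw [Finset.sum_mul]
    refine Finset.sum_congr rfl fun y _ => ?_
    have e : (∑ i, (x i + y i + a i) * u i)
        = ((∑ i, x i * u i) + (∑ i, y i * u i)) + (∑ i, a i * u i) := by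
      rw [← Finset.sum_add_distrib, ← Finset.sum_add_distrib]
      exact Finset.sum_congr rfl fun i _ => by ring
    rw [e, chi_add, chi_add]; ring
  rw [Finset.sum_congr rfl fun u _ => expand u, ← Finset.mul_sum]
  have swap : ∑ u : Fin n → ZMod 2, ∑ x : Fin n → ZMod 2, ∑ y : Fin n → ZMod 2,
        chi (f x) * chi (f y) * chi (∑ i, (x i + y i + a i) * u i)
      = ∑ x : Fin n → ZMod 2, ∑ y : Fin n → ZMod 2,
        chi (f x) * chi (f y) * ∑ u : Fin n → ZMod 2, chi (∑ i, (x i + y i + a i) * u i) := by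
    rw [Finset.sum_comm]
    refine Finset.sum_congr rfl fun x _ => ?_
    rw [Finset.sum_comm]
    refine Finset.sum_congr rfl fun y _ => ?_
    rw [Finset.mul_sum]
  rw [swap]
  have key : ∀ x : Fin n → ZMod 2,
      (∑ y : Fin n → ZMod 2, chi (f x) * chi (f y) *
        ∑ u : Fin n → ZMod 2, chi (∑ i, (x i + y i + a i) * u i))
      = chi (f x) * chi (f (x + a)) * (2:ℝ)^n := by
    intro x
    rw [Finset.sum_eq_single (x + a)]
    · rw [sum_chi_univ]
      have hz : (fun i => x i + (x + a) i + a i) = (0 : Fin n → ZMod 2) := by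
        funext i
        show x i + (x i + a i) + a i = 0
        generalize x i = b; generalize a i = c
        revert b c; decide
      rw [if_pos hz]
    · intro y _ hyx
      rw [sum_chi_univ]
      have hz : ¬((fun i => x i + y i + a i) = (0 : Fin n → ZMod 2)) := by
        intro hz0
        apply hyx
        funext i
        have h2 := congrFun hz0 i
        have h3 : x i + y i + a i = 0 := h2
        show y i = x i + a i
        revert h3
        generalize x i = b; generalize y i = c; generalize a i = d
        revert b c d; decide
      rw [if_neg hz, mul_zero]
    · intro hx; exact absurd (mem_univ _) hx
  rw [Finset.sum_congr rfl fun x _ => key x]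
  unfold autocorr
  have : ∀ x : Fin n → ZMod 2, chi (f x) * chi (f (x + a)) * (2:ℝ)^n
      = chi (f x + f (x + a)) * (2:ℝ)^n := by
    intro x; rw [chi_add]
  rw [Finset.sum_congr rfl fun x _ => this x, ← Finset.sum_mul]
  have hchieq : ∀ x : Fin n → ZMod 2,
      ((-1 : ℝ)) ^ (f x + f (x + a)).val = chi (f x + f (x + a)) := fun _ => rfl
  rw [Finset.sum_congr rfl fun x _ => hchieq x]
  field_simp

lemma influence_eq {n : ℕ} (f : (Fin n → ZMod 2) → ZMod 2) (T : Finset (Fin n)) :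
    influence f T
      = 1 - ∑ u ∈ univ.filter (fun u : Fin n → ZMod 2 => ∀ i ∈ T, u i = 0), (walsh f u) ^ 2 := by
  classical
  unfold influence
  congr 1
  have e1 : ∑ a ∈ univ.filter (fun a : Fin n → ZMod 2 => ∀ i, a i ≠ 0 → i ∈ T), autocorr f a
      = ∑ u : Fin n → ZMod 2, (walsh f u) ^ 2 *
          (if ∀ i ∈ T, u i = 0 then (2 : ℝ) ^ T.card else 0) := by
    rw [Finset.sum_congr rfl fun a _ => autocorr_eq f a, Finset.sum_comm]
    refine Finset.sum_congr rfl fun u _ => ?_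
    rw [← Finset.mul_sum, sum_chi_filter]
  rw [e1]
  have e2 : ∑ u : Fin n → ZMod 2, (walsh f u) ^ 2 *
          (if ∀ i ∈ T, u i = 0 then (2 : ℝ) ^ T.card else 0)
      = (∑ u ∈ univ.filter (fun u : Fin n → ZMod 2 => ∀ i ∈ T, u i = 0),
          (walsh f u) ^ 2) * (2 : ℝ) ^ T.card := by
    rw [Finset.sum_mul, Finset.sum_filter]
    refine Finset.sum_congr rfl fun u _ => ?_
    by_cases h : ∀ i ∈ T, u i = 0 <;> simp [h]
  rw [e2]
  have h2 : (0:ℝ) < 2 ^ T.card := by positivity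
  field_simp

lemma card_subsets_of {n t : ℕ} (S : Finset (Fin n)) :
    (univ.filter fun T : Finset (Fin n) => T.card = t ∧ ∀ i ∈ T, i ∈ S).card
      = S.card.choose t := by
  classical
  rw [← Finset.card_powersetCard]
  congr 1
  ext T
  simp only [Finset.mem_filter, Finset.mem_univ, true_and, Finset.mem_powersetCard,
    Finset.subset_iff]
  tauto

lemma wt_le {n : ℕ} (u : Fin n → ZMod 2) : wt u ≤ n := by
  unfold wt
  exact le_trans (Finset.card_filter_le _ _) (by simp)

lemma card_zero_set {n : ℕ} (u : Fin n → ZMod 2) :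
    (univ.filter fun i => u i = 0).card = n - wt u := by
  classical
  unfold wt
  have := Finset.card_filter_add_card_filter_not
    (s := (univ : Finset (Fin n))) (p := fun i => u i = 0)
  simp only [Finset.card_univ, Fintype.card_fin] at this
  simp only [ne_eq]
  omega

lemma totalInf_eq {n t : ℕ} (f : (Fin n → ZMod 2) → ZMod 2) (ht : t ≤ n) :
    totalInf f t = ∑ u : Fin n → ZMod 2,
      (walsh f u) ^ 2 * (1 - ((n - wt u).choose t : ℝ) / (n.choose t)) := by
  classical
  have hC : (0:ℝ) < (n.choose t : ℝ) := by exact_mod_cast Nat.choose_pos ht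
  unfold totalInf
  have hsum : ∑ T ∈ univ.filter (fun T : Finset (Fin n) => T.card = t), influence f T
      = (n.choose t : ℝ) - ∑ u : Fin n → ZMod 2,
          (walsh f u) ^ 2 * ((n - wt u).choose t : ℝ) := by
    rw [Finset.sum_congr rfl fun T _ => influence_eq f T]
    rw [Finset.sum_sub_distrib, Finset.sum_const]
    have hcard : (univ.filter fun T : Finset (Fin n) => T.card = t).card = n.choose t := by
      have e : (univ.filter fun T : Finset (Fin n) => T.card = t)
          = Finset.powersetCard t univ := by
        ext T; simp [Finset.mem_powersetCard]
      rw [e, Finset.card_powersetCard, Finset.card_univ, Fintype.card_fin]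
    rw [hcard]
    congr 1
    · simp
    -- double sum swap and count
    have swap : ∑ T ∈ univ.filter (fun T : Finset (Fin n) => T.card = t),
        ∑ u ∈ univ.filter (fun u : Fin n → ZMod 2 => ∀ i ∈ T, u i = 0), (walsh f u) ^ 2
        = ∑ u : Fin n → ZMod 2, (walsh f u) ^ 2 *
            ((univ.filter fun T : Finset (Fin n) => T.card = t ∧ ∀ i ∈ T, u i = 0).card : ℝ) := by
      rw [Finset.sum_congr rfl (fun T (_ : T ∈ univ.filter
            (fun T : Finset (Fin n) => T.card = t)) => Finset.sum_filter _ _)]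
      rw [Finset.sum_comm]
      refine Finset.sum_congr rfl fun u _ => ?_
      rw [Finset.sum_filter]
      rw [Finset.sum_congr rfl (fun T (_ : T ∈ (univ : Finset (Finset (Fin n)))) => by
        rw [← ite_and])]
      rw [← Finset.sum_filter, Finset.sum_const, nsmul_eq_mul, mul_comm]
    rw [swap]
    refine Finset.sum_congr rfl fun u _ => ?_
    congr 2
    have : (univ.filter fun T : Finset (Fin n) => T.card = t ∧ ∀ i ∈ T, u i = 0).card
        = (univ.filter fun i => u i = 0).card.choose t := by
      rw [← card_subsets_of (univ.filter fun i => u i = 0)]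
      congr 1
      ext T
      simp
    rw [this, card_zero_set]
  rw [hsum]
  rw [sub_div]
  rw [div_self (ne_of_gt hC)]
  rw [Finset.sum_div]
  have hp := parseval f
  calc (1:ℝ) - ∑ u : Fin n → ZMod 2, (walsh f u) ^ 2 * ((n - wt u).choose t : ℝ) / (n.choose t)
      = ∑ u : Fin n → ZMod 2, (walsh f u) ^ 2
        - ∑ u : Fin n → ZMod 2, (walsh f u) ^ 2 * (((n - wt u).choose t : ℝ) / (n.choose t)) := by
        rw [hp]
        congr 1
        exact Finset.sum_congr rfl fun u _ => by ring
    _ = _ := by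
        rw [← Finset.sum_sub_distrib]
        exact Finset.sum_congr rfl fun u _ => by ring

lemma descFactorial_mul_pow_le (t : ℕ) : ∀ m n : ℕ, m ≤ n →
    m.descFactorial t * n ^ t ≤ n.descFactorial t * m ^ t := by
  induction t with
  | zero => intro m n _; simp
  | succ t ih =>
    intro m n hmn
    have h1 : (m - t) * n ≤ (n - t) * m := by
      rcases le_or_gt t m with h | h
      · rw [Nat.sub_mul, Nat.sub_mul]
        rw [Nat.mul_comm n m]
        exact Nat.sub_le_sub_left (Nat.mul_le_mul_left t hmn) (m * n)
      · rw [Nat.sub_eq_zero_of_le h.le]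
        simp
    calc m.descFactorial (t+1) * n ^ (t+1)
        = ((m - t) * n) * (m.descFactorial t * n ^ t) := by
          rw [Nat.descFactorial_succ]; ring
      _ ≤ ((n - t) * m) * (n.descFactorial t * m ^ t) := Nat.mul_le_mul h1 (ih m n hmn)
      _ = n.descFactorial (t+1) * m ^ (t+1) := by
          rw [Nat.descFactorial_succ]; ring

lemma choose_mul_pow_le {t m n : ℕ} (hmn : m ≤ n) :
    m.choose t * n ^ t ≤ n.choose t * m ^ t := by
  have h := descFactorial_mul_pow_le t m n hmn
  rw [Nat.descFactorial_eq_factorial_mul_choose, Nat.descFactorial_eq_factorial_mul_choose] at h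
  have ht : 0 < t.factorial := Nat.factorial_pos t
  rw [mul_assoc, mul_assoc] at h
  exact Nat.le_of_mul_le_mul_left h ht

lemma choose_sub_one_lt {n t : ℕ} (h1 : 1 ≤ t) (h2 : t ≤ n) :
    (n - 1).choose t < n.choose t := by
  obtain ⟨m, rfl⟩ : ∃ m, n = m + 1 := ⟨n - 1, by omega⟩
  obtain ⟨s, rfl⟩ : ∃ s, t = s + 1 := ⟨t - 1, by omega⟩
  simp only [Nat.add_sub_cancel]
  rw [Nat.choose_succ_succ]
  have : 0 < m.choose s := Nat.choose_pos (by omega)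
  simp only [Nat.succ_eq_add_one]
  omega

/-- the Fourier spectrum of `f` is `ε`-concentrated on coefficients of
weight below `k` whenever `k ≥ t - 1 + (n - t + 1)(1 - (1 - x)^{1/t})`,
where `x = t-inf(f)/ε`. -/
theorem spectrum_concentration {n : ℕ} (f : (Fin n → ZMod 2) → ZMod 2) (t : ℕ)
    (h1 : 1 ≤ t) (h2 : t ≤ n) (ε : ℝ) (hε0 : 0 < ε) (hεl : totalInf f t ≤ ε) (hεu : ε ≤ 1)
    (k : ℕ) (hk : 1 ≤ k)
    (hkge : (k : ℝ) ≥ (t : ℝ) - 1 + ((n : ℝ) - t + 1) *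
        (1 - (1 - totalInf f t / ε) ^ ((1 : ℝ) / (t : ℝ)))) :
    ∑ i ∈ Finset.Icc k n, pHat f i ≤ ε := by
  classical
  by_cases hkn : k ≤ n
  swap
  · rw [Finset.Icc_eq_empty (by omega)]
    simpa using hε0.le
  -- notation
  set x : ℝ := totalInf f t / ε with hxdef
  set y : ℝ := (1 - x) ^ ((1 : ℝ) / (t : ℝ)) with hydef
  have hC : (0:ℝ) < (n.choose t : ℝ) := by exact_mod_cast Nat.choose_pos h2
  set μ : ℕ → ℝ := fun i => 1 - ((n - i).choose t : ℝ) / (n.choose t) with hμdef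
  have hμmono : ∀ i j : ℕ, i ≤ j → μ i ≤ μ j := by
    intro i j hij
    have hle : ((n - j).choose t : ℝ) ≤ ((n - i).choose t : ℝ) := by
      exact_mod_cast Nat.choose_le_choose t (Nat.sub_le_sub_left hij n)
    simp only [hμdef]
    gcongr
  have hμ0 : ∀ i : ℕ, 0 ≤ μ i := by
    intro i
    have hle : ((n - i).choose t : ℝ) ≤ (n.choose t : ℝ) := by
      exact_mod_cast Nat.choose_le_choose t (Nat.sub_le n i)
    simp only [hμdef]
    rw [sub_nonneg, div_le_one hC]
    exact hle
  have htot : totalInf f t = ∑ u : Fin n → ZMod 2, (walsh f u) ^ 2 * μ (wt u) :=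
    totalInf_eq f h2
  -- tail rewriting
  have tail_eq : ∑ i ∈ Finset.Icc k n, pHat f i
      = ∑ u ∈ univ.filter (fun u : Fin n → ZMod 2 => k ≤ wt u), (walsh f u) ^ 2 := by
    unfold pHat
    rw [Finset.sum_fiberwise_eq_sum_filter]
    congr 1
    ext u
    simp only [Finset.mem_filter, Finset.mem_univ, true_and, Finset.mem_Icc]
    exact ⟨fun h => h.1, fun h => ⟨h, wt_le u⟩⟩
  rw [tail_eq]
  -- key inequality : tail * μ k ≤ totalInf
  have key : (∑ u ∈ univ.filter (fun u : Fin n → ZMod 2 => k ≤ wt u), (walsh f u) ^ 2) * μ k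
      ≤ totalInf f t := by
    rw [htot, Finset.sum_mul]
    calc ∑ u ∈ univ.filter (fun u : Fin n → ZMod 2 => k ≤ wt u), (walsh f u) ^ 2 * μ k
        ≤ ∑ u ∈ univ.filter (fun u : Fin n → ZMod 2 => k ≤ wt u),
            (walsh f u) ^ 2 * μ (wt u) := by
          refine Finset.sum_le_sum fun u hu => ?_
          have hku : k ≤ wt u := (Finset.mem_filter.mp hu).2
          exact mul_le_mul_of_nonneg_left (hμmono k (wt u) hku) (sq_nonneg _)
      _ ≤ ∑ u : Fin n → ZMod 2, (walsh f u) ^ 2 * μ (wt u) := by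
          refine Finset.sum_le_sum_of_subset_of_nonneg (Finset.filter_subset _ _)
            fun u _ _ => mul_nonneg (sq_nonneg _) (hμ0 _)
  -- analytic bound : x ≤ μ k
  have hn0 : (0:ℝ) < n := by
    have : 1 ≤ n := le_trans h1 h2
    exact_mod_cast this
  have ht0 : (0:ℝ) < t := by exact_mod_cast h1
  have hx1 : x ≤ 1 := by
    rw [hxdef, div_le_one hε0]; exact hεl
  have h1x : (0:ℝ) ≤ 1 - x := by linarith
  have hy0 : (0:ℝ) ≤ y := Real.rpow_nonneg h1x _
  have hyt : y ^ t = 1 - x := by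
    rw [hydef, ← Real.rpow_natCast ((1 - x) ^ ((1 : ℝ) / (t : ℝ))) t,
      ← Real.rpow_mul h1x, one_div, inv_mul_cancel₀ (ne_of_gt ht0), Real.rpow_one]
  have hky : 1 - (k:ℝ)/n ≤ y := by
    have hge : (k : ℝ) ≥ (n : ℝ) * (1 - y) := by
      have htn : (t : ℝ) ≤ (n : ℝ) := by exact_mod_cast h2
      have ht1' : (0:ℝ) ≤ (t : ℝ) - 1 := by
        have : (1:ℝ) ≤ (t:ℝ) := by exact_mod_cast h1
        linarith
      nlinarith [hkge, mul_nonneg ht1' hy0]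
    have h3 : (1 : ℝ) - y ≤ (k : ℝ) / n := by
      rw [le_div_iff₀ hn0]
      linarith [hge]
    linarith
  -- choose ratio bound
  have hratio : (((n - k).choose t : ℝ)) / (n.choose t : ℝ) ≤ 1 - x := by
    have hnat' : ((n - k).choose t : ℝ) * (n : ℝ) ^ t ≤ (n.choose t : ℝ) * ((n - k : ℕ) : ℝ) ^ t := by
      exact_mod_cast choose_mul_pow_le (Nat.sub_le n k)
    have hnkr : ((n - k : ℕ) : ℝ) = (n : ℝ) - k := by
      exact Nat.cast_sub hkn
    have hstep1 : (((n - k).choose t : ℝ)) / (n.choose t : ℝ) ≤ (((n - k : ℕ) : ℝ) / n) ^ t := by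
      rw [div_pow, div_le_div_iff₀ hC (by positivity)]
      linarith [hnat']
    have hstep2 : (((n - k : ℕ) : ℝ) / n) ^ t ≤ y ^ t := by
      apply pow_le_pow_left₀
      · positivity
      · rw [hnkr]
        have : ((n : ℝ) - k) / n = 1 - (k : ℝ) / n := by
          field_simp
        rw [this]
        exact hky
    calc (((n - k).choose t : ℝ)) / (n.choose t : ℝ) ≤ (((n - k : ℕ) : ℝ) / n) ^ t := hstep1
      _ ≤ y ^ t := hstep2
      _ = 1 - x := hyt
  have hxμ : x ≤ μ k := by
    simp only [hμdef]
    linarith [hratio]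
  -- μ k is positive
  have hμkpos : 0 < μ k := by
    have hlt : (n - k).choose t < n.choose t := by
      have hle1 : (n - k).choose t ≤ (n - 1).choose t :=
        Nat.choose_le_choose t (Nat.sub_le_sub_left hk n)
      exact lt_of_le_of_lt hle1 (choose_sub_one_lt h1 h2)
    have : ((n - k).choose t : ℝ) < (n.choose t : ℝ) := by exact_mod_cast hlt
    simp only [hμdef]
    rw [sub_pos, div_lt_one hC]
    exact this
  -- conclude
  have htail : (∑ u ∈ univ.filter (fun u : Fin n → ZMod 2 => k ≤ wt u), (walsh f u) ^ 2)
      ≤ totalInf f t / μ k := by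
    rw [le_div_iff₀ hμkpos]
    exact key
  have hfin : totalInf f t / μ k ≤ ε := by
    rw [div_le_iff₀ hμkpos]
    have : totalInf f t / ε ≤ μ k := hxμ
    rw [div_le_iff₀ hε0] at this
    linarith
  linarith
end BF
end

section
/- Let f be an n-variable Boolean function and T ⊆ [n] a nonempty subset with #T = t. Then inf_f(T) ≤ 𝓘_f(T), where 𝓘_f(T) is the Ben-Or–Linial influence. Moreover, equality holds if and only if for every α ∈ F_2^{n−t}, the restriction f_α is either a constant function or a balanced function (equivalently, (W_{f_α}(0_t))² ∈ {0, 1}). -/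
open Finset

namespace BF

/-- Combine an assignment `y` on the coordinates in `T` with an assignment `a` on the
coordinates outside `T` into a full input vector. -/
def combine {n : ℕ} (T : Finset (Fin n)) (y : {i : Fin n // i ∈ T} → ZMod 2)
    (a : {i : Fin n // i ∉ T} → ZMod 2) : Fin n → ZMod 2 :=
  fun i => if h : i ∈ T then y ⟨i, h⟩ else a ⟨i, h⟩

/-- The Walsh transform, at the all-zero point, of the restriction `f_a` of `f` obtained by
fixing the variables outside `T` to the values of `a`. -/
noncomputable def restWalsh0 {n : ℕ} (f : (Fin n → ZMod 2) → ZMod 2) (T : Finset (Fin n))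
    (a : {i : Fin n // i ∉ T} → ZMod 2) : ℝ :=
  (1 / 2 ^ T.card) * ∑ y : {i : Fin n // i ∈ T} → ZMod 2, (-1 : ℝ) ^ (f (combine T y a)).val

/-- The Ben-Or–Linial influence: the probability over `a` (the values fixed outside `T`)
that the restriction `f_a` is not constant. -/
noncomputable def blInf {n : ℕ} (f : (Fin n → ZMod 2) → ZMod 2) (T : Finset (Fin n)) : ℝ :=
  ((univ.filter fun a : {i : Fin n // i ∉ T} → ZMod 2 =>
      ¬ ∀ y y' : {i : Fin n // i ∈ T} → ZMod 2,
        f (combine T y a) = f (combine T y' a)).card : ℝ) / 2 ^ (n - T.card)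


lemma neg_one_pow_val_add (u v : ZMod 2) :
    ((-1:ℝ)) ^ (u + v).val = (-1:ℝ) ^ u.val * (-1:ℝ) ^ v.val := by
  rw [ZMod.val_add, ← pow_add]
  have hu := ZMod.val_lt u; have hv := ZMod.val_lt v
  interval_cases u.val <;> interval_cases v.val <;> norm_num

lemma neg_one_pow_eq_one_iff (u : ZMod 2) : ((-1:ℝ)) ^ u.val = 1 ↔ u = 0 := by
  rw [← ZMod.val_eq_zero]
  have hu := ZMod.val_lt u
  interval_cases u.val <;> norm_num

lemma neg_one_pow_eq_neg_one_iff (u : ZMod 2) : ((-1:ℝ)) ^ u.val = -1 ↔ u = 1 := by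
  rw [← ZMod.val_eq_one (by norm_num)]
  have hu := ZMod.val_lt u
  interval_cases u.val <;> norm_num

lemma combine_add {n : ℕ} (T : Finset (Fin n)) (y y' : {i : Fin n // i ∈ T} → ZMod 2)
    (a a' : {i : Fin n // i ∉ T} → ZMod 2) :
    combine T (y + y') (a + a') = combine T y a + combine T y' a' := by
  funext i; simp only [combine, Pi.add_apply]; split_ifs <;> rfl

lemma sum_combine {n : ℕ} (T : Finset (Fin n)) (F : (Fin n → ZMod 2) → ℝ) :
    ∑ x : Fin n → ZMod 2, F x
      = ∑ a : {i : Fin n // i ∉ T} → ZMod 2, ∑ y : {i : Fin n // i ∈ T} → ZMod 2,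
          F (combine T y a) := by
  rw [← (Equiv.piEquivPiSubtypeProd (fun i => i ∈ T) (fun _ => ZMod 2)).symm.sum_comp F,
    Fintype.sum_prod_type, Finset.sum_comm]
  rfl

lemma filter_supp_eq_image {n : ℕ} (T : Finset (Fin n)) :
    univ.filter (fun a : Fin n → ZMod 2 => ∀ i, a i ≠ 0 → i ∈ T)
      = univ.image (fun y : {i : Fin n // i ∈ T} → ZMod 2 => combine T y 0) := by
  ext a
  simp only [mem_filter, mem_univ, true_and, mem_image]
  constructor
  · intro h
    refine ⟨fun i => a i.1, funext fun i => ?_⟩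
    by_cases hi : i ∈ T
    · simp [combine, hi]
    · have h0 : a i = 0 := by by_contra h0; exact hi (h i h0)
      simp [combine, hi, h0]
  · rintro ⟨y, rfl⟩ i hi
    by_contra hiT
    simp [combine, hiT] at hi

lemma combine_inj {n : ℕ} (T : Finset (Fin n)) :
    ∀ y ∈ (univ : Finset ({i : Fin n // i ∈ T} → ZMod 2)), ∀ y' ∈ univ,
      combine T y 0 = combine T y' 0 → y = y' := by
  intro y _ y' _ h
  funext i
  have := congrFun h i.1
  simpa [combine, i.2] using this

lemma key_sum {n : ℕ} (f : (Fin n → ZMod 2) → ZMod 2) (T : Finset (Fin n)) :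
    ∑ y : {i : Fin n // i ∈ T} → ZMod 2, autocorr f (combine T y 0)
      = (1 / 2 ^ n) * ∑ a : {i : Fin n // i ∉ T} → ZMod 2,
          (∑ y : {i : Fin n // i ∈ T} → ZMod 2, (-1:ℝ) ^ (f (combine T y a)).val) ^ 2 := by
  unfold autocorr
  rw [← Finset.mul_sum]
  congr 1
  have step1 : ∀ y : {i : Fin n // i ∈ T} → ZMod 2,
      ∑ x : Fin n → ZMod 2, (-1 : ℝ) ^ (f x + f (x + combine T y 0)).val
        = ∑ a : {i : Fin n // i ∉ T} → ZMod 2, ∑ y' : {i : Fin n // i ∈ T} → ZMod 2,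
            ((-1:ℝ) ^ (f (combine T y' a)).val) * ((-1:ℝ) ^ (f (combine T (y' + y) a)).val) := by
    intro y
    rw [sum_combine T]
    refine Finset.sum_congr rfl fun a _ => Finset.sum_congr rfl fun y' _ => ?_
    rw [← neg_one_pow_val_add]
    congr 2
    rw [← combine_add, add_zero]
  calc ∑ y, ∑ x : Fin n → ZMod 2, (-1 : ℝ) ^ (f x + f (x + combine T y 0)).val
      = ∑ y : {i : Fin n // i ∈ T} → ZMod 2, ∑ a : {i : Fin n // i ∉ T} → ZMod 2,
          ∑ y' : {i : Fin n // i ∈ T} → ZMod 2,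
            ((-1:ℝ) ^ (f (combine T y' a)).val) * ((-1:ℝ) ^ (f (combine T (y' + y) a)).val) :=
        Finset.sum_congr rfl fun y _ => step1 y
    _ = ∑ a : {i : Fin n // i ∉ T} → ZMod 2, ∑ y, ∑ y',
            ((-1:ℝ) ^ (f (combine T y' a)).val) * ((-1:ℝ) ^ (f (combine T (y' + y) a)).val) :=
        Finset.sum_comm
    _ = ∑ a : {i : Fin n // i ∉ T} → ZMod 2, ∑ y', ∑ y,
            ((-1:ℝ) ^ (f (combine T y' a)).val) * ((-1:ℝ) ^ (f (combine T (y' + y) a)).val) :=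
        Finset.sum_congr rfl fun a _ => Finset.sum_comm
    _ = ∑ a : {i : Fin n // i ∉ T} → ZMod 2,
          (∑ y : {i : Fin n // i ∈ T} → ZMod 2, (-1:ℝ) ^ (f (combine T y a)).val) ^ 2 := by
        refine Finset.sum_congr rfl fun a _ => ?_
        rw [sq, Finset.sum_mul]
        refine Finset.sum_congr rfl fun y' _ => ?_
        rw [← Finset.mul_sum]
        congr 1
        exact Fintype.sum_equiv (Equiv.addLeft y') _ _ (fun y => rfl)

lemma card_T {n : ℕ} (T : Finset (Fin n)) :
    Fintype.card ({i : Fin n // i ∈ T} → ZMod 2) = 2 ^ T.card := by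
  simp [Fintype.card_fun]

lemma card_compl {n : ℕ} (T : Finset (Fin n)) :
    Fintype.card ({i : Fin n // i ∉ T} → ZMod 2) = 2 ^ (n - T.card) := by
  simp [Fintype.card_fun, Fintype.card_subtype_compl]

lemma restWalsh0_sq_le_one {n : ℕ} (f : (Fin n → ZMod 2) → ZMod 2) (T : Finset (Fin n))
    (a : {i : Fin n // i ∉ T} → ZMod 2) : (restWalsh0 f T a) ^ 2 ≤ 1 := by
  rw [sq_le_one_iff_abs_le_one]
  unfold restWalsh0
  rw [abs_mul]
  have h1 : |(1:ℝ) / 2 ^ T.card| = 1 / 2 ^ T.card := abs_of_nonneg (by positivity)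
  have h2 : |∑ y : {i : Fin n // i ∈ T} → ZMod 2, (-1 : ℝ) ^ (f (combine T y a)).val|
      ≤ 2 ^ T.card := by
    calc |∑ y : {i : Fin n // i ∈ T} → ZMod 2, (-1 : ℝ) ^ (f (combine T y a)).val|
        ≤ ∑ y : {i : Fin n // i ∈ T} → ZMod 2, |(-1 : ℝ) ^ (f (combine T y a)).val| :=
          Finset.abs_sum_le_sum_abs _ _
      _ = ∑ y : {i : Fin n // i ∈ T} → ZMod 2, 1 := by
          refine Finset.sum_congr rfl fun y _ => ?_
          rw [abs_pow, abs_neg, abs_one, one_pow]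
      _ = 2 ^ T.card := by simp [card_T]
  rw [h1]
  calc (1:ℝ)/2^T.card * |∑ y : {i : Fin n // i ∈ T} → ZMod 2, (-1:ℝ)^(f (combine T y a)).val|
      ≤ 1/2^T.card * 2^T.card := by
        apply mul_le_mul_of_nonneg_left h2; positivity
    _ = 1 := by field_simp

lemma const_iff {n : ℕ} (f : (Fin n → ZMod 2) → ZMod 2) (T : Finset (Fin n))
    (a : {i : Fin n // i ∉ T} → ZMod 2) :
    (∀ y y' : {i : Fin n // i ∈ T} → ZMod 2, f (combine T y a) = f (combine T y' a))
      ↔ (restWalsh0 f T a) ^ 2 = 1 := by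
  have hpos : (0:ℝ) < 2 ^ T.card := by positivity
  constructor
  · intro h
    have hc : ∀ y : {i : Fin n // i ∈ T} → ZMod 2, f (combine T y a) = f (combine T 0 a) :=
      fun y => h y 0
    have : restWalsh0 f T a = (-1:ℝ) ^ (f (combine T 0 a)).val := by
      unfold restWalsh0
      rw [Finset.sum_congr rfl fun y _ => by rw [hc y]]
      rw [Finset.sum_const, card_univ, card_T]
      field_simp
      simp [nsmul_eq_mul]
    rw [this, ← pow_mul, mul_comm, pow_mul]
    norm_num
  · intro h
    have h' : restWalsh0 f T a = 1 ∨ restWalsh0 f T a = -1 := by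
      rcases mul_eq_zero.mp (show (restWalsh0 f T a - 1) * (restWalsh0 f T a + 1) = 0 by nlinarith) with h1 | h1
      · exact Or.inl (by linarith)
      · exact Or.inr (by linarith)
    have key : ∀ c : ℝ, (c = 1 ∨ c = -1) → restWalsh0 f T a = c →
        ∀ y : {i : Fin n // i ∈ T} → ZMod 2, ((-1:ℝ)) ^ (f (combine T y a)).val = c := by
      intro c hc hW y
      have hsum : ∑ y' : {i : Fin n // i ∈ T} → ZMod 2,
          (1 - c * (-1:ℝ) ^ (f (combine T y' a)).val) = 0 := by
        rw [Finset.sum_sub_distrib, ← Finset.mul_sum]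
        have hS : ∑ y' : {i : Fin n // i ∈ T} → ZMod 2, (-1:ℝ) ^ (f (combine T y' a)).val
            = c * 2 ^ T.card := by
          have := hW
          unfold restWalsh0 at this
          rcases hc with rfl | rfl <;> [skip; skip] <;>
            · field_simp at this ⊢; linarith
        rw [hS, Finset.sum_const, card_univ, card_T]
        rcases hc with rfl | rfl <;> ring
      have hnonneg : ∀ y' ∈ (univ : Finset ({i : Fin n // i ∈ T} → ZMod 2)),
          0 ≤ 1 - c * (-1:ℝ) ^ (f (combine T y' a)).val := by
        intro y' _
        have : ((-1:ℝ)) ^ (f (combine T y' a)).val = 1 ∨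
            ((-1:ℝ)) ^ (f (combine T y' a)).val = -1 := by
          rcases Nat.even_or_odd (f (combine T y' a)).val with he | ho
          · exact Or.inl (he.neg_one_pow)
          · exact Or.inr (ho.neg_one_pow)
        rcases hc with rfl | rfl <;> rcases this with h1 | h1 <;> rw [h1] <;> norm_num
      have := (Finset.sum_eq_zero_iff_of_nonneg hnonneg).mp hsum y (mem_univ y)
      have h1 : c * (-1:ℝ) ^ (f (combine T y a)).val = 1 := by linarith
      rcases hc with rfl | rfl <;> nlinarith [sq_nonneg ((-1:ℝ) ^ (f (combine T y a)).val)]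
    intro y y'
    rcases h' with hW | hW
    · have h1 := key 1 (Or.inl rfl) hW y
      have h2 := key 1 (Or.inl rfl) hW y'
      rw [neg_one_pow_eq_one_iff] at h1 h2
      rw [h1, h2]
    · have h1 := key (-1) (Or.inr rfl) hW y
      have h2 := key (-1) (Or.inr rfl) hW y'
      rw [neg_one_pow_eq_neg_one_iff] at h1 h2
      rw [h1, h2]


lemma influence_eq_s19 {n : ℕ} (f : (Fin n → ZMod 2) → ZMod 2) (T : Finset (Fin n)) :
    influence f T
      = 1 - (1 / 2 ^ (n - T.card)) * ∑ a : {i : Fin n // i ∉ T} → ZMod 2,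
          (restWalsh0 f T a) ^ 2 := by
  have ht : T.card ≤ n := by simpa using Finset.card_le_univ T
  have h2 : (2:ℝ) ^ n = 2 ^ (n - T.card) * 2 ^ T.card := by
    rw [← pow_add, Nat.sub_add_cancel ht]
  unfold influence
  rw [filter_supp_eq_image, Finset.sum_image (combine_inj T), key_sum]
  congr 1
  unfold restWalsh0
  simp only [mul_pow]
  rw [← Finset.mul_sum]
  have key : ∀ S : ℝ, (1/2^T.card : ℝ) * (1/2^n * S)
      = (1/2^(n-T.card) : ℝ) * ((1/2^T.card)^2 * S) := by
    intro S
    rw [h2]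
    ring
  exact key _


/-- `inf_f(T) ≤ 𝓘_f(T)`, with equality iff every restriction `f_a` satisfies
`(W_{f_a}(0_t))² ∈ {0, 1}` (i.e. is constant or balanced). -/
theorem influence_le_blInf {n : ℕ} (f : (Fin n → ZMod 2) → ZMod 2)
    (T : Finset (Fin n)) (hT : T.Nonempty) :
    influence f T ≤ blInf f T ∧
      (influence f T = blInf f T ↔
        ∀ a : {i : Fin n // i ∉ T} → ZMod 2,
          (restWalsh0 f T a) ^ 2 = 0 ∨ (restWalsh0 f T a) ^ 2 = 1) := by
  classical
  have hNpos : (0:ℝ) < 2 ^ (n - T.card) := by positivity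
  -- rewrite blInf as a normalized sum of indicators
  set P : ({i : Fin n // i ∉ T} → ZMod 2) → Prop := fun a =>
    ∀ y y' : {i : Fin n // i ∈ T} → ZMod 2, f (combine T y a) = f (combine T y' a) with hP
  have hbl : blInf f T = (1 / 2 ^ (n - T.card)) *
      ∑ a : {i : Fin n // i ∉ T} → ZMod 2, (if P a then 0 else 1 : ℝ) := by
    unfold blInf
    rw [div_eq_mul_inv, mul_comm, ← one_div]
    congr 1
    rw [Finset.card_filter]
    push_cast
    refine Finset.sum_congr rfl fun a _ => ?_
    by_cases h : P a
    · rw [if_neg (not_not_intro h), if_pos h]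
    · rw [if_pos h, if_neg h]
  have hinf : influence f T = (1 / 2 ^ (n - T.card)) *
      ∑ a : {i : Fin n // i ∉ T} → ZMod 2, (1 - (restWalsh0 f T a) ^ 2) := by
    rw [influence_eq_s19, Finset.sum_sub_distrib, Finset.sum_const, card_univ, card_compl,
      nsmul_eq_mul, mul_one, mul_sub]
    congr 1
    push_cast
    field_simp
  -- termwise inequality
  have hterm : ∀ a : {i : Fin n // i ∉ T} → ZMod 2,
      (1 - (restWalsh0 f T a) ^ 2) ≤ (if P a then 0 else 1 : ℝ) := by
    intro a
    by_cases h : P a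
    · rw [if_pos h]
      have := (const_iff f T a).mp h
      linarith
    · rw [if_neg h]
      nlinarith [sq_nonneg (restWalsh0 f T a)]
  have hsumle : ∑ a : {i : Fin n // i ∉ T} → ZMod 2, (1 - (restWalsh0 f T a) ^ 2)
      ≤ ∑ a : {i : Fin n // i ∉ T} → ZMod 2, (if P a then 0 else 1 : ℝ) :=
    Finset.sum_le_sum fun a _ => hterm a
  constructor
  · rw [hinf, hbl]
    apply mul_le_mul_of_nonneg_left hsumle (by positivity)
  · rw [hinf, hbl]
    constructor
    · intro h
      have hsums : ∑ a : {i : Fin n // i ∉ T} → ZMod 2, (1 - (restWalsh0 f T a) ^ 2)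
          = ∑ a : {i : Fin n // i ∉ T} → ZMod 2, (if P a then 0 else 1 : ℝ) :=
        mul_left_cancel₀ (show (1 / 2 ^ (n - T.card) : ℝ) ≠ 0 by positivity) h
      have heach := (Finset.sum_eq_sum_iff_of_le (fun a _ => hterm a)).mp hsums
      intro a
      have ha := heach a (mem_univ a)
      by_cases hc : P a
      · exact Or.inr ((const_iff f T a).mp hc)
      · rw [if_neg hc] at ha
        left; linarith
    · intro h
      have hAB : ∑ a : {i : Fin n // i ∉ T} → ZMod 2, (1 - (restWalsh0 f T a) ^ 2)
          = ∑ a : {i : Fin n // i ∉ T} → ZMod 2, (if P a then 0 else 1 : ℝ) := by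
        refine Finset.sum_congr rfl fun a _ => ?_
        by_cases hc : P a
        · rw [if_pos hc]
          have := (const_iff f T a).mp hc
          linarith
        · rw [if_neg hc]
          rcases h a with h0 | h1
          · rw [h0]; norm_num
          · exact absurd ((const_iff f T a).mpr h1) hc
      rw [hAB]

end BF
end
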